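/- The quaternion group Q₈ of order 8 is not a split group: for every pair of elements x, y that generate Q₈, the cyclic subgroup ⟨x⟩ has nontrivial intersection with the subgroup [Q₈,Q₈]·⟨y⟩ generated by the commutator subgroup together with y. -/

import Mathlib

open scoped commutatorElement in
lemma q8_neg_one_mem_commutator :
    (QuaternionGroup.a 2 : QuaternionGroup 2) ∈ commutator (QuaternionGroup 2) := by
  have h : ⁅(QuaternionGroup.a 1 : QuaternionGroup 2), (QuaternionGroup.xa 0 : QuaternionGroup 2)⁆ =
      QuaternionGroup.a 2 := by decide
  rw [← h, commutator]
  exact Subgroup.commutator_mem_commutator (Subgroup.mem_top _) (Subgroup.mem_top _)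

lemma q8_neg_one_mem_zpowers (x : QuaternionGroup 2) (hx : x ≠ 1) :
    (QuaternionGroup.a 2 : QuaternionGroup 2) ∈ Subgroup.zpowers x := by
  have h : x ^ (2 : ℕ) = QuaternionGroup.a 2 ∨ x = QuaternionGroup.a 2 := by
    revert hx; revert x; decide
  rcases h with h | h
  · refine ⟨2, ?_⟩
    show x ^ ((2:ℕ):ℤ) = _
    rw [zpow_natCast, h]
  · exact h ▸ Subgroup.mem_zpowers x

/-- The quaternion group Q₈ is not a split group: for every generating pair x, y,
⟨x⟩ ∩ ([Q₈,Q₈]·⟨y⟩) is nontrivial. -/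
theorem quaternionGroup_not_split (x y : QuaternionGroup 2)
    (hgen : Subgroup.closure {x, y} = ⊤) :
    Subgroup.zpowers x ⊓ (commutator (QuaternionGroup 2) ⊔ Subgroup.zpowers y) ≠ ⊥ := by
  have hx : x ≠ 1 := by
    rintro rfl
    have hsub : Subgroup.closure {(1 : QuaternionGroup 2), y} ≤ Subgroup.zpowers y := by
      rw [Subgroup.closure_le]
      rintro z (rfl | rfl)
      · exact Subgroup.one_mem _
      · exact Subgroup.mem_zpowers _
    rw [hgen] at hsub
    have h1 : (QuaternionGroup.a 1 : QuaternionGroup 2) ∈ Subgroup.zpowers y :=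
      hsub (Subgroup.mem_top _)
    have h2 : (QuaternionGroup.xa 0 : QuaternionGroup 2) ∈ Subgroup.zpowers y :=
      hsub (Subgroup.mem_top _)
    obtain ⟨m, hm⟩ := h1
    obtain ⟨k, hk⟩ := h2
    have hc : (QuaternionGroup.a 1 : QuaternionGroup 2) * QuaternionGroup.xa 0 =
        QuaternionGroup.xa 0 * QuaternionGroup.a 1 := by
      rw [← hm, ← hk]
      exact (Commute.zpow_zpow_self y m k)
    exact absurd hc (by decide)
  intro hbot
  have hmem : (QuaternionGroup.a 2 : QuaternionGroup 2) ∈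
      Subgroup.zpowers x ⊓ (commutator (QuaternionGroup 2) ⊔ Subgroup.zpowers y) :=
    ⟨q8_neg_one_mem_zpowers x hx, Subgroup.mem_sup_left q8_neg_one_mem_commutator⟩
  rw [hbot, Subgroup.mem_bot] at hmem
  exact absurd hmem (by decide)
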